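/- Let β ≥ 0 be fixed and let α ∈ [−1/2, 0]. For natural numbers n > β and reals t > 0 define E_n(t) = (1/n) · (n − β)^{α+1} · t^α · γ(α+1, (n−β)t) / Γ(α+1), where γ(s, z) = ∫_0^z u^{s−1} e^{−u} du is the lower incomplete Gamma function. Then for every R > 0 there exists a finite constant C = C(R, α, β) such that E_n(t) ≤ C for all natural numbers n > β and all t ∈ (0, R]. -/

import Mathlib

open MeasureTheory Real Filter

/-- The Szász–Mirakyan basis functions `ψ_{n,k}(x) = e^{-nx} (nx)^k / k!`. -/
noncomputable def psi (n k : ℕ) (x : ℝ) : ℝ :=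
  Real.exp (-(n * x)) * (n * x) ^ k / (Nat.factorial k)

/-- The Szász–Mirakyan–Laguerre–Durrmeyer operator `M_n^{(α,β)}`. -/
noncomputable def M (α β : ℝ) (n : ℕ) (f : ℝ → ℝ) (x : ℝ) : ℝ :=
  ∑' k : ℕ, (((n : ℝ) - β) ^ ((k : ℝ) + α + 1) / Real.Gamma ((k : ℝ) + α + 1)) *
    (∫ t in Set.Ioi (0 : ℝ), f t * t ^ ((k : ℝ) + α) * Real.exp (-((n : ℝ) - β) * t)) *
    psi n k x

/-- The `r`-th moment `μ_r^{(α,β)}(x) = M_n^{(α,β)}[t ↦ t^r](x)`. -/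
noncomputable def mu (α β : ℝ) (n : ℕ) (r : ℕ) (x : ℝ) : ℝ :=
  M α β n (fun t => t ^ r) x

/-- The lower incomplete Gamma function `γ(s,z) = ∫_0^z u^{s−1} e^{−u} du`. -/
noncomputable def lowerGamma (s z : ℝ) : ℝ :=
  ∫ u in (0 : ℝ)..z, u ^ (s - 1) * Real.exp (-u)

/-- The auxiliary function `E_n(t)` from Lemma on uniform bounds. -/
noncomputable def Efun (α β : ℝ) (n : ℕ) (t : ℝ) : ℝ :=
  (1 / (n : ℝ)) * ((n : ℝ) - β) ^ (α + 1) * t ^ α *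
    lowerGamma (α + 1) (((n : ℝ) - β) * t) / Real.Gamma (α + 1)

lemma lowerGamma_nonneg (s z : ℝ) (hz : 0 ≤ z) : 0 ≤ lowerGamma s z := by
  apply intervalIntegral.integral_nonneg hz
  intro u hu
  exact mul_nonneg (Real.rpow_nonneg hu.1 _) (Real.exp_pos _).le

lemma integrableOn_aux {s z : ℝ} (hs : 0 < s) :
    IntegrableOn (fun u : ℝ => u ^ (s - 1) * Real.exp (-u)) (Set.Ioc 0 z) := by
  apply IntegrableOn.mono_set _ Set.Ioc_subset_Ioi_self
  exact (Real.GammaIntegral_convergent hs).congr_fun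
    (fun x _ => mul_comm _ _) measurableSet_Ioi

lemma lowerGamma_le_Gamma (s z : ℝ) (hs : 0 < s) (hz : 0 ≤ z) :
    lowerGamma s z ≤ Real.Gamma s := by
  rw [lowerGamma, intervalIntegral.integral_of_le hz, Real.Gamma_eq_integral hs]
  have := (Real.GammaIntegral_convergent hs).congr_fun
    (fun x (_ : x ∈ Set.Ioi (0:ℝ)) => mul_comm (Real.exp (-x)) (x ^ (s-1))) measurableSet_Ioi
  calc ∫ u in Set.Ioc 0 z, u ^ (s-1) * Real.exp (-u)
      ≤ ∫ u in Set.Ioi 0, u ^ (s-1) * Real.exp (-u) := by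
        apply setIntegral_mono_set this
        · filter_upwards [ae_restrict_mem measurableSet_Ioi] with x hx
          exact mul_nonneg (Real.rpow_nonneg (le_of_lt hx) _) (Real.exp_pos _).le
        · exact Filter.Eventually.of_forall (fun x hx => hx.1)
    _ = ∫ u in Set.Ioi 0, Real.exp (-u) * u ^ (s-1) := by
        apply setIntegral_congr_fun measurableSet_Ioi
        intro x _; exact mul_comm _ _

lemma lowerGamma_le_rpow (s z : ℝ) (hs : 0 < s) (hz : 0 ≤ z) :
    lowerGamma s z ≤ z ^ s / s := by
  have h1 : lowerGamma s z ≤ ∫ u in (0:ℝ)..z, u ^ (s - 1) := by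
    apply intervalIntegral.integral_mono_on hz
    · rw [intervalIntegrable_iff_integrableOn_Ioc_of_le hz]
      exact integrableOn_aux hs
    · exact intervalIntegral.intervalIntegrable_rpow' (by linarith)
    · intro x hx
      nth_rewrite 2 [show x ^ (s-1) = x ^ (s-1) * 1 by ring]
      exact mul_le_mul_of_nonneg_left (Real.exp_le_one_iff.2 (by linarith [hx.1]))
        (Real.rpow_nonneg hx.1 _)
  rw [integral_rpow (Or.inl (by linarith))] at h1
  rw [sub_add_cancel, Real.zero_rpow hs.ne', sub_zero] at h1
  exact h1

/-- Uniform boundedness of `E_n` on `(0, R]`, uniformly in `n > β`. -/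
theorem stmt_16 (β : ℝ) (hβ : 0 ≤ β) (α : ℝ) (hα : α ∈ Set.Icc (-(1 : ℝ) / 2) 0)
    (R : ℝ) (hR : 0 < R) :
    ∃ C : ℝ, ∀ n : ℕ, β < n → ∀ t ∈ Set.Ioc (0 : ℝ) R, Efun α β n t ≤ C := by
  obtain ⟨hα1, hα2⟩ := hα
  have hs : 0 < α + 1 := by linarith
  have hΓ : 0 < Real.Gamma (α + 1) := Real.Gamma_pos_of_pos hs
  have hΓ2eq : Real.Gamma (α + 2) = (α + 1) * Real.Gamma (α + 1) := by
    have := Real.Gamma_add_one (s := α + 1) hs.ne'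
    rwa [show α + 1 + 1 = α + 2 by ring] at this
  have hΓ2 : 0 < Real.Gamma (α + 2) := Real.Gamma_pos_of_pos (by linarith)
  refine ⟨max 1 (1 / Real.Gamma (α + 2)), ?_⟩
  intro n hn t ht
  obtain ⟨ht0, htR⟩ := ht
  set m : ℝ := (n : ℝ) - β with hm_def
  have hm : 0 < m := by simp [hm_def]; linarith
  have hn0 : (0 : ℝ) < n := lt_of_le_of_lt hβ hn
  have hz0 : 0 < m * t := mul_pos hm ht0
  have hmn : m ≤ (n : ℝ) := by simp [hm_def]; linarith
  have hA : (1 / (n : ℝ)) * m ^ (α + 1) * t ^ α = (m / n) * (m * t) ^ α := by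
    rw [Real.mul_rpow hm.le ht0.le, Real.rpow_add_one hm.ne' α]
    ring
  have hmn1 : m / (n : ℝ) ≤ 1 := (div_le_one hn0).2 hmn
  have hAnn : 0 ≤ (m / n) * (m * t) ^ α :=
    mul_nonneg (by positivity) (Real.rpow_nonneg hz0.le _)
  rw [Efun, hA]
  by_cases hz : 1 ≤ m * t
  · -- large z: γ ≤ Γ
    have h1 : (m / n) * (m * t) ^ α * lowerGamma (α + 1) (m * t) / Real.Gamma (α + 1)
        ≤ (m / n) * (m * t) ^ α := by
      rw [div_le_iff₀ hΓ]
      exact mul_le_mul_of_nonneg_left (lowerGamma_le_Gamma _ _ hs hz0.le) hAnn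
    have h2 : (m * t) ^ α ≤ 1 := Real.rpow_le_one_of_one_le_of_nonpos hz hα2
    have h3 : (m / n) * (m * t) ^ α ≤ 1 := by
      calc (m / n) * (m * t) ^ α ≤ (m / n) * 1 :=
            mul_le_mul_of_nonneg_left h2 (by positivity)
        _ ≤ 1 := by rw [mul_one]; exact hmn1
    exact le_trans (h1.trans h3) (le_max_left _ _)
  · -- small z: γ ≤ z^s / s
    push_neg at hz
    have h1 : (m / n) * (m * t) ^ α * lowerGamma (α + 1) (m * t) / Real.Gamma (α + 1)
        ≤ (m / n) * (m * t) ^ α * ((m * t) ^ (α + 1) / (α + 1)) / Real.Gamma (α + 1) := by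
      apply div_le_div_of_nonneg_right ?_ hΓ.le |>.trans_eq rfl
      exact mul_le_mul_of_nonneg_left (lowerGamma_le_rpow _ _ hs hz0.le) hAnn
    have hid : (m / n) * (m * t) ^ α * ((m * t) ^ (α + 1) / (α + 1)) / Real.Gamma (α + 1)
        = (m / n) * (m * t) ^ (2 * α + 1) / Real.Gamma (α + 2) := by
      have e1 : (m * t) ^ (α + 1) = (m * t) ^ α * (m * t) := Real.rpow_add_one hz0.ne' α
      have e2 : (m * t) ^ (2 * α + 1) = (m * t) ^ α * (m * t) ^ α * (m * t) := by
        rw [show (2 * α + 1) = α + (α + 1) by ring, Real.rpow_add hz0, e1]; ring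
      rw [hΓ2eq, e1, e2]
      field_simp
    have h2 : (m * t) ^ (2 * α + 1) ≤ 1 :=
      Real.rpow_le_one hz0.le hz.le (by linarith)
    have h3 : (m / n) * (m * t) ^ (2 * α + 1) ≤ 1 := by
      calc (m / n) * (m * t) ^ (2 * α + 1) ≤ (m / n) * 1 :=
            mul_le_mul_of_nonneg_left h2 (by positivity)
        _ ≤ 1 := by rw [mul_one]; exact hmn1
    have h4 : (m / n) * (m * t) ^ (2 * α + 1) / Real.Gamma (α + 2) ≤ 1 / Real.Gamma (α + 2) :=
      div_le_div_of_nonneg_right h3 hΓ2.le |>.trans_eq rfl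
    calc _ ≤ _ := h1
      _ = _ := hid
      _ ≤ 1 / Real.Gamma (α + 2) := h4
      _ ≤ _ := le_max_right _ _
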